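/- Let γ ∈ (0, 1), β ∈ (0, γ), T a positive integer, and let w_1, …, w_{T−1} be nonnegative reals. Then ∑_{t=1}^T γ^{T−t} ∑_{i=1}^{t−1} w_i ∑_{k=t−i}^{t−1} k β^k ≤ (2βγ / ((γ − β)²(1 − β))) · ∑_{i=1}^{T−1} γ^{T−i} w_i. -/

import Mathlib

open Finset

private lemma sum_Icc_shift (f : ℕ → ℝ) (a b : ℕ) :
    ∑ k ∈ Icc a b, f k = ∑ m ∈ range (b + 1 - a), f (a + m) := by
  apply Finset.sum_nbij' (fun k => k - a) (fun m => a + m)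
  · intro k hk; simp only [mem_Icc] at hk; simp only [mem_range]; omega
  · intro m hm; simp only [mem_range] at hm; simp only [mem_Icc]; omega
  · intro k hk; simp only [mem_Icc] at hk; omega
  · intro m hm; omega
  · intro k hk; simp only [mem_Icc] at hk; congr 1; omega

private lemma geom_range_le {a : ℝ} (h0 : 0 ≤ a) (h1 : a < 1) (n : ℕ) :
    ∑ m ∈ range n, a ^ m ≤ (1 - a)⁻¹ := by
  have := Summable.sum_le_tsum (range n) (fun i _ => pow_nonneg h0 i)
    (summable_geometric_of_lt_one h0 h1)
  rwa [tsum_geometric_of_lt_one h0 h1] at this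

private lemma coe_mul_geom_le {a : ℝ} (h0 : 0 ≤ a) (h1 : a < 1) (s : Finset ℕ) :
    ∑ m ∈ s, (m : ℝ) * a ^ m ≤ a / (1 - a) ^ 2 := by
  have hn : ‖a‖ < 1 := by rwa [Real.norm_eq_abs, abs_of_nonneg h0]
  have := Summable.sum_le_tsum s (fun i (_ : i ∉ s) => mul_nonneg (Nat.cast_nonneg i) (pow_nonneg h0 i))
    (hasSum_coe_mul_geometric_of_norm_lt_one hn).summable
  rwa [tsum_coe_mul_geometric_of_norm_lt_one hn] at this

/-- tail of `∑ k β^k` starting at `j`. -/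
private lemma tail_sum_le {β : ℝ} (h0 : 0 < β) (h1 : β < 1) (j n : ℕ) :
    ∑ k ∈ Icc j n, (k : ℝ) * β ^ k
      ≤ β ^ j * ((j : ℝ) * (1 - β)⁻¹ + β / (1 - β) ^ 2) := by
  rw [sum_Icc_shift]
  have hrw : ∀ m : ℕ, ((j + m : ℕ) : ℝ) * β ^ (j + m)
      = β ^ j * ((j : ℝ) * β ^ m) + β ^ j * ((m : ℝ) * β ^ m) := by
    intro m; push_cast; rw [pow_add]; ring
  rw [Finset.sum_congr rfl (fun m _ => hrw m), Finset.sum_add_distrib, ← Finset.mul_sum,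
    ← Finset.mul_sum, ← Finset.mul_sum, mul_add]
  have hβj : (0:ℝ) ≤ β ^ j := pow_nonneg h0.le j
  apply add_le_add
  · exact mul_le_mul_of_nonneg_left
      (mul_le_mul_of_nonneg_left (geom_range_le h0.le h1 _) (Nat.cast_nonneg j)) hβj
  · exact mul_le_mul_of_nonneg_left (coe_mul_geom_le h0.le h1 _) hβj

theorem momentum_weighted_sum_inequality
    (γ β : ℝ) (hγ0 : 0 < γ) (hγ1 : γ < 1) (hβ0 : 0 < β) (hβγ : β < γ)
    (T : ℕ) (hT : 0 < T) (w : ℕ → ℝ) (hw : ∀ i, 0 ≤ w i) :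
    ∑ t ∈ Icc 1 T, γ ^ (T - t) *
        ∑ i ∈ Icc 1 (t - 1), w i * ∑ k ∈ Icc (t - i) (t - 1), (k : ℝ) * β ^ k
      ≤ (2 * β * γ / ((γ - β) ^ 2 * (1 - β))) * ∑ i ∈ Icc 1 (T - 1), γ ^ (T - i) * w i := by
  set a : ℝ := β / γ with ha
  have hβ1 : β < 1 := hβγ.trans hγ1
  have h1β : 0 < 1 - β := by linarith
  have hγβ : 0 < γ - β := by linarith
  have ha0 : 0 < a := div_pos hβ0 hγ0
  have ha1 : a < 1 := (div_lt_one hγ0).2 hβγ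
  have h1a : 0 < 1 - a := by linarith
  -- abbreviations
  set c1 : ℝ := (1 - β)⁻¹ with hc1
  set c2 : ℝ := β / (1 - β) ^ 2 with hc2
  have hc1pos : 0 < c1 := inv_pos.2 h1β
  have hc2pos : 0 < c2 := div_pos hβ0 (pow_pos h1β 2)
  -- Step 1: push γ^(T-t) inside and swap the two outer sums
  have hswap :
      ∑ t ∈ Icc 1 T, γ ^ (T - t) *
          ∑ i ∈ Icc 1 (t - 1), w i * ∑ k ∈ Icc (t - i) (t - 1), (k : ℝ) * β ^ k
        = ∑ i ∈ Icc 1 (T - 1), ∑ t ∈ Icc (i + 1) T,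
            γ ^ (T - t) * (w i * ∑ k ∈ Icc (t - i) (t - 1), (k : ℝ) * β ^ k) := by
    simp_rw [Finset.mul_sum]
    apply Finset.sum_comm'
    intro t i
    simp only [mem_Icc]
    omega
  rw [hswap]
  -- Step 2: per-i bound
  have key : ∀ i ∈ Icc 1 (T - 1),
      ∑ t ∈ Icc (i + 1) T,
          γ ^ (T - t) * (w i * ∑ k ∈ Icc (t - i) (t - 1), (k : ℝ) * β ^ k)
        ≤ (2 * β * γ / ((γ - β) ^ 2 * (1 - β))) * (γ ^ (T - i) * w i) := by
    intro i hi
    simp only [mem_Icc] at hi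
    -- bound each term
    have hterm : ∀ t ∈ Icc (i + 1) T,
        γ ^ (T - t) * (w i * ∑ k ∈ Icc (t - i) (t - 1), (k : ℝ) * β ^ k)
          ≤ γ ^ (T - i) * w i * (a ^ (t - i) * (((t - i : ℕ) : ℝ) * c1 + c2)) := by
      intro t ht
      simp only [mem_Icc] at ht
      have hS : ∑ k ∈ Icc (t - i) (t - 1), (k : ℝ) * β ^ k
          ≤ β ^ (t - i) * (((t - i : ℕ) : ℝ) * c1 + c2) := tail_sum_le hβ0 hβ1 _ _
      have hpow : γ ^ (T - t) * β ^ (t - i) = γ ^ (T - i) * a ^ (t - i) := by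
        rw [ha, div_pow, mul_div_assoc']
        rw [show T - i = (T - t) + (t - i) by omega, pow_add]
        field_simp
      calc γ ^ (T - t) * (w i * ∑ k ∈ Icc (t - i) (t - 1), (k : ℝ) * β ^ k)
          ≤ γ ^ (T - t) * (w i * (β ^ (t - i) * (((t - i : ℕ) : ℝ) * c1 + c2))) := by
            apply mul_le_mul_of_nonneg_left _ (pow_nonneg hγ0.le _)
            exact mul_le_mul_of_nonneg_left hS (hw i)
        _ = γ ^ (T - i) * w i * (a ^ (t - i) * (((t - i : ℕ) : ℝ) * c1 + c2)) := by
            rw [show γ ^ (T - t) * (w i * (β ^ (t - i) * (((t - i : ℕ) : ℝ) * c1 + c2)))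
              = (γ ^ (T - t) * β ^ (t - i)) * (w i * (((t - i : ℕ) : ℝ) * c1 + c2)) by ring,
              hpow]; ring
    have h1 := Finset.sum_le_sum hterm
    -- now bound the reduced sum
    have hred : ∑ t ∈ Icc (i + 1) T, a ^ (t - i) * (((t - i : ℕ) : ℝ) * c1 + c2)
        ≤ a * (c1 * (a / (1 - a) ^ 2) + (c1 + c2) * (1 - a)⁻¹) := by
      rw [sum_Icc_shift (fun t => a ^ (t - i) * (((t - i : ℕ) : ℝ) * c1 + c2)) (i + 1) T]
      have hrw : ∀ m : ℕ, a ^ (i + 1 + m - i) * (((i + 1 + m - i : ℕ) : ℝ) * c1 + c2)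
          = a * (c1 * ((m : ℝ) * a ^ m) + (c1 + c2) * a ^ m) := by
        intro m
        rw [show i + 1 + m - i = m + 1 by omega]
        push_cast
        rw [pow_succ]
        ring
      rw [Finset.sum_congr rfl (fun m _ => hrw m), ← Finset.mul_sum, Finset.sum_add_distrib,
        ← Finset.mul_sum, ← Finset.mul_sum]
      apply mul_le_mul_of_nonneg_left _ ha0.le
      apply add_le_add
      · exact mul_le_mul_of_nonneg_left (coe_mul_geom_le ha0.le ha1 _) hc1pos.le
      · exact mul_le_mul_of_nonneg_left (geom_range_le ha0.le ha1 _) (by positivity)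
    -- constant comparison
    have hconst : a * (c1 * (a / (1 - a) ^ 2) + (c1 + c2) * (1 - a)⁻¹)
        ≤ 2 * β * γ / ((γ - β) ^ 2 * (1 - β)) := by
      have h1a' : 1 - a = (γ - β) / γ := by field_simp [ha]; rw [ha, sub_mul, div_mul_cancel₀ _ hγ0.ne', one_mul]
      have e1 : a * (c1 * (a / (1 - a) ^ 2))
          = β ^ 2 / ((γ - β) ^ 2 * (1 - β)) := by
        rw [h1a', hc1, ha]; field_simp
      have e2 : a * ((c1 + c2) * (1 - a)⁻¹) = β / ((γ - β) * (1 - β) ^ 2) := by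
        rw [h1a', hc1, hc2, ha]; field_simp; ring
      rw [mul_add, e1, e2]
      have hb1 : β ^ 2 / ((γ - β) ^ 2 * (1 - β)) ≤ β * γ / ((γ - β) ^ 2 * (1 - β)) := by
        apply div_le_div_of_nonneg_right _ (by positivity)
        nlinarith
      have hb2 : β / ((γ - β) * (1 - β) ^ 2) ≤ β * γ / ((γ - β) ^ 2 * (1 - β)) := by
        rw [div_le_div_iff₀ (by positivity) (by positivity)]
        nlinarith [mul_pos (mul_pos (mul_pos hβ0 hγβ) h1β) (mul_pos hβ0 (sub_pos.2 hγ1))]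
      calc β ^ 2 / ((γ - β) ^ 2 * (1 - β)) + β / ((γ - β) * (1 - β) ^ 2)
          ≤ β * γ / ((γ - β) ^ 2 * (1 - β)) + β * γ / ((γ - β) ^ 2 * (1 - β)) := by
            linarith
        _ = 2 * β * γ / ((γ - β) ^ 2 * (1 - β)) := by ring
      
    calc ∑ t ∈ Icc (i + 1) T,
          γ ^ (T - t) * (w i * ∑ k ∈ Icc (t - i) (t - 1), (k : ℝ) * β ^ k)
        ≤ ∑ t ∈ Icc (i + 1) T,
            γ ^ (T - i) * w i * (a ^ (t - i) * (((t - i : ℕ) : ℝ) * c1 + c2)) := h1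
      _ = γ ^ (T - i) * w i *
            ∑ t ∈ Icc (i + 1) T, a ^ (t - i) * (((t - i : ℕ) : ℝ) * c1 + c2) := by
          rw [Finset.mul_sum]
      _ ≤ γ ^ (T - i) * w i *
            (a * (c1 * (a / (1 - a) ^ 2) + (c1 + c2) * (1 - a)⁻¹)) := by
          apply mul_le_mul_of_nonneg_left hred
          exact mul_nonneg (pow_nonneg hγ0.le _) (hw i)
      _ ≤ γ ^ (T - i) * w i * (2 * β * γ / ((γ - β) ^ 2 * (1 - β))) := by
          apply mul_le_mul_of_nonneg_left hconst
          exact mul_nonneg (pow_nonneg hγ0.le _) (hw i)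
      _ = (2 * β * γ / ((γ - β) ^ 2 * (1 - β))) * (γ ^ (T - i) * w i) := by ring
  calc ∑ i ∈ Icc 1 (T - 1), ∑ t ∈ Icc (i + 1) T,
        γ ^ (T - t) * (w i * ∑ k ∈ Icc (t - i) (t - 1), (k : ℝ) * β ^ k)
      ≤ ∑ i ∈ Icc 1 (T - 1),
          (2 * β * γ / ((γ - β) ^ 2 * (1 - β))) * (γ ^ (T - i) * w i) :=
        Finset.sum_le_sum key
    _ = (2 * β * γ / ((γ - β) ^ 2 * (1 - β))) * ∑ i ∈ Icc 1 (T - 1), γ ^ (T - i) * w i := by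
        rw [Finset.mul_sum]
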